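/- Let Δ be a distribution of Σ of size at least 3. Then Δ has a reduction if and only if [⊥(Δ)] is a reduction of Δ. -/

import Mathlib

/-- A *distribution* of the (finite) alphabet `α`: a family of non-empty,
pairwise incomparable (under set inclusion) sub-alphabets whose union is `α`.
Its size is `comps.ncard`. -/
structure Distr (α : Type) [Fintype α] where
  comps : Set (Set α)
  comps_nonempty : ∀ S ∈ comps, S.Nonempty
  comps_cover : ∀ a : α, ∃ S ∈ comps, a ∈ S
  comps_incomp : ∀ S ∈ comps, ∀ T ∈ comps, S ≠ T → ¬ S ⊆ T

section Defs

variable {α : Type} [Fintype α]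

/-- Natural projection `P_{Σ'}`: erase from a string all symbols not in `S`. -/
noncomputable def projA (S : Set α) (s : List α) : List α :=
  s.filter fun a => @decide (a ∈ S) (Classical.propDecidable _)

/-- `L` is decomposable with respect to `Δ`:
`L = ∥_i P_{Σ_i}(L) = ⋂_i P_{Σ_i}⁻¹(P_{Σ_i}(L))`. -/
def Decomposable (L : Set (List α)) (Δ : Distr α) : Prop :=
  L = ⋂ S ∈ Δ.comps, projA S ⁻¹' (projA S '' L)

/-- The partial order `≤_Σ` on distributions: every component of `Δ` is
contained in some component of `Δ'`. -/
def DistLE (Δ Δ' : Distr α) : Prop :=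
  ∀ S ∈ Δ.comps, ∃ T ∈ Δ'.comps, S ⊆ T

/-- `P` is a *reduction* of `Δ`. -/
def IsReduction (P : Set (Distr α)) (Δ : Distr α) : Prop :=
  2 ≤ P.ncard ∧
  (∀ Δ' ∈ P, Δ'.comps.ncard < Δ.comps.ncard) ∧
  (∀ L : Set (List α), Decomposable L Δ ↔ ∀ Δ' ∈ P, Decomposable L Δ')

/-- The maximal members (under set inclusion) of a family of sets. -/
def MaximalMem {β : Type} (F : Set (Set β)) : Set (Set β) :=
  {S | S ∈ F ∧ ∀ T ∈ F, S ⊆ T → S = T}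

/-- The dependence relation `D_Δ`. -/
def DepRel (Δ : Distr α) : Set (α × α) :=
  {p | ∃ S ∈ Δ.comps, p.1 ∈ S ∧ p.2 ∈ S}

/-- The independence relation `I_Δ = Σ × Σ − D_Δ`. -/
def IndepRel (Δ : Distr α) : Set (α × α) :=
  {p | ¬ ∃ S ∈ Δ.comps, p.1 ∈ S ∧ p.2 ∈ S}

/-- `Σ' ⊑ Δ`: `Σ'` is contained in some component of `Δ`. -/
def SqSub (S : Set α) (Δ : Distr α) : Prop :=
  ∃ T ∈ Δ.comps, S ⊆ T

/-- `Δ` is the greatest lower bound of the family `D` with respect to `≤_Σ`. -/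
def IsGLBFam {l : ℕ} (D : Fin l → Distr α) (Δ : Distr α) : Prop :=
  (∀ i, DistLE Δ (D i)) ∧
  ∀ Δ''' : Distr α, (∀ i, DistLE Δ''' (D i)) → DistLE Δ''' Δ

/-- `Δ'` is *merged* from `Δ`: `Δ' ≠ (Σ)` and `Δ'` is obtained from a
partition of the components of `Δ` having at least one block of size ≥ 2 by
taking the unions over the blocks and keeping only the maximal resulting
sub-alphabets. -/
def MergedFrom (Δ' Δ : Distr α) : Prop :=
  Δ'.comps ≠ {Set.univ} ∧
  ∃ part : Set (Set (Set α)),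
    (∀ B ∈ part, B.Nonempty) ∧
    (∀ B ∈ part, B ⊆ Δ.comps) ∧
    (∀ B ∈ part, ∀ C ∈ part, B ≠ C → Disjoint B C) ∧
    (∀ S ∈ Δ.comps, ∃ B ∈ part, S ∈ B) ∧
    (∃ B ∈ part, ∃ S ∈ B, ∃ T ∈ B, S ≠ T) ∧
    Δ'.comps = MaximalMem {U : Set α | ∃ B ∈ part, U = ⋃₀ B}

/-- Membership in the search space `S_Δ`: a set of distributions merged from
`Δ` that are pairwise `≤_Σ`-incomparable. -/
def MemS (Δ : Distr α) (P : Set (Distr α)) : Prop :=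
  (∀ Δ' ∈ P, MergedFrom Δ' Δ) ∧
  ∀ Δ₁ ∈ P, ∀ Δ₂ ∈ P, Δ₁ ≠ Δ₂ → ¬ DistLE Δ₁ Δ₂

/-- The ordering `≤_Δ` on sets of distributions: every member of `Q` has a
member of `P` below it with respect to `≤_Σ`. -/
def SetLE (P Q : Set (Distr α)) : Prop :=
  ∀ Δ' ∈ Q, ∃ Δ'' ∈ P, DistLE Δ'' Δ'

/-- `[F]`: the `≤_Σ`-minimal members of a set of distributions. -/
def MinimalD (F : Set (Distr α)) : Set (Distr α) :=
  {Δ' | Δ' ∈ F ∧ ∀ Δ'' ∈ F, DistLE Δ'' Δ' → DistLE Δ' Δ''}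

/-- `Δ'` is obtained from `Δ` by merging exactly two components `S ≠ T`
(and keeping only the maximal sub-alphabets); the members of `⊥(Δ)`. -/
def MinMergedFrom (Δ' Δ : Distr α) : Prop :=
  ∃ S ∈ Δ.comps, ∃ T ∈ Δ.comps, S ≠ T ∧
    Δ'.comps = MaximalMem ((Δ.comps \ {S, T}) ∪ {S ∪ T})

/-- The set `A(Δ)` of shared symbols of a distribution. -/
def SharedSyms (Δ : Distr α) : Set α :=
  {a | ∃ S ∈ Δ.comps, ∃ T ∈ Δ.comps, S ≠ T ∧ a ∈ S ∧ a ∈ T}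

/-- The substitution of `Δ'` into the component `C` of `Δ''` yields `Δs`:
`Δs` is obtained from the components of `Δ''` other than `C` together with the
intersections `C ∩ S` for components `S` of `Δ'`, keeping only the maximal
non-empty members. -/
def SubstResult (Δ' Δ'' : Distr α) (C : Set α) (Δs : Distr α) : Prop :=
  Δs.comps =
    MaximalMem {T : Set α |
      T.Nonempty ∧ (T ∈ Δ''.comps \ {C} ∨ ∃ S ∈ Δ'.comps, T = C ∩ S)}

/-- One swap of two adjacent symbols forming a pair in `I`. -/
def SwapStep (I : Set (α × α)) (s t : List α) : Prop :=
  ∃ (u v : List α) (a b : α),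
    (a, b) ∈ I ∧ s = u ++ a :: b :: v ∧ t = u ++ b :: a :: v

/-- Trace equivalence with respect to `I`: a finite sequence of swaps of
adjacent independent symbols. -/
def TraceEquiv (I : Set (α × α)) : List α → List α → Prop :=
  Relation.ReflTransGen (SwapStep I)

/-- `L` is trace-closed with respect to `I`. -/
def TraceClosed (I : Set (α × α)) (L : Set (List α)) : Prop :=
  L = {t | ∃ s ∈ L, TraceEquiv I s t}

/-- The map `N` determined by the enumeration `c` of the components of a
distribution: `N(a) = {i : a ∉ Σ_i}`. -/
def Nmap {n : ℕ} (c : Fin n → Set α) (a : α) : Set (Fin n) :=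
  {i | a ∉ c i}

/-- A simple path from `x` to `y` in the graph `(Σ, D)`: a list of pairwise
distinct symbols, starting at `x`, ending at `y`, with consecutive symbols
related by `D`. -/
def IsSimplePath (D : Set (α × α)) (p : List α) (x y : α) : Prop :=
  p.Nodup ∧ p.head? = some x ∧ p.getLast? = some y ∧
    p.Chain' (fun a b => (a, b) ∈ D)

/-- `Cr_D(S, y)` (with `N` given by the enumeration `c`): the set of indices
`i` such that some simple path `p` from some `x ∈ S` to `y` in `(Σ, D)`
satisfies `i ∈ ⋂_{a ∈ p.dropLast} N(a)`. -/
def CrSet {n : ℕ} (c : Fin n → Set α) (D : Set (α × α)) (S : Set α) (y : α) :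
    Set (Fin n) :=
  {i | ∃ x ∈ S, ∃ p : List α,
    IsSimplePath D p x y ∧ ∀ a ∈ p.dropLast, i ∈ Nmap c a}

/-- The smallest set of distributions containing `Q` and closed under
substitution. -/
inductive SubstClosure (Q : Set (Distr α)) : Distr α → Prop
  | base (Δ' : Distr α) (h : Δ' ∈ Q) : SubstClosure Q Δ'
  | step (Δ' Δ'' Δs : Distr α) (C : Set α)
      (h1 : SubstClosure Q Δ') (h2 : SubstClosure Q Δ'')
      (hC : C ∈ Δ''.comps) (hA : SharedSyms Δ' ⊆ C)
      (hs : SubstResult Δ' Δ'' C Δs) : SubstClosure Q Δs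

end Defs

section Count

variable {α : Type} [Fintype α] [DecidableEq α]

/-- `L(Σ_j)` (with `j` 0-indexed, so the paper's exponent `j+1` is `j+2`
here): all strings containing exactly one occurrence of each `σ_i ∈ Σ_j` and
exactly `j+2` occurrences of each `σ_i ∉ Σ_j`. -/
def Lword {m : ℕ} (σ : Fin m → α) (Sj : Set α) (j : ℕ) : Set (List α) :=
  {s | ∀ i : Fin m,
    (σ i ∈ Sj → s.count (σ i) = 1) ∧ (σ i ∉ Sj → s.count (σ i) = j + 2)}

/-- The candidate counter example `L_cand = ⋃_j L(Σ_j)`, relative to an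
enumeration `c` of the components and an enumeration `σ` of the alphabet. -/
def Lcand {n m : ℕ} (c : Fin n → Set α) (σ : Fin m → α) : Set (List α) :=
  ⋃ j : Fin n, Lword σ (c j) (j : ℕ)

end Count

section Proof

variable {α : Type} [Fintype α]

instance : Finite (Distr α) :=
  Finite.of_injective (Distr.comps (α := α)) (by
    intro a b h; cases a; cases b; cases h; rfl)

lemma projA_nil (S : Set α) : projA S ([] : List α) = [] := rfl

lemma projA_cons_mem {S : Set α} {a : α} (h : a ∈ S) (u : List α) :
    projA S (a :: u) = a :: projA S u := by
  simp [projA, List.filter_cons, h]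

lemma projA_cons_not_mem {S : Set α} {a : α} (h : a ∉ S) (u : List α) :
    projA S (a :: u) = projA S u := by
  simp [projA, List.filter_cons, h]

lemma projA_comp {S T : Set α} (h : S ⊆ T) (u : List α) :
    projA S (projA T u) = projA S u := by
  induction u with
  | nil => rfl
  | cons a u ih =>
    by_cases haT : a ∈ T
    · by_cases haS : a ∈ S
      · simp [projA_cons_mem, projA_cons_not_mem, haT, haS, ih]
      · simp [projA_cons_mem, projA_cons_not_mem, haT, haS, ih]
    · have haS : a ∉ S := fun hs => haT (h hs)
      simp [projA_cons_mem, projA_cons_not_mem, haT, haS, ih]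

lemma subset_iInter_proj (L : Set (List α)) (Δ : Distr α) :
    L ⊆ ⋂ S ∈ Δ.comps, projA S ⁻¹' (projA S '' L) := by
  intro s hs
  simp only [Set.mem_iInter]
  intro S _
  exact ⟨s, hs, rfl⟩

lemma distLE_refl (Δ : Distr α) : DistLE Δ Δ := fun S hS => ⟨S, hS, subset_rfl⟩

lemma distLE_trans {Δ₁ Δ₂ Δ₃ : Distr α} (h1 : DistLE Δ₁ Δ₂) (h2 : DistLE Δ₂ Δ₃) :
    DistLE Δ₁ Δ₃ := by
  intro S hS
  obtain ⟨T, hT, hST⟩ := h1 S hS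
  obtain ⟨U, hU, hTU⟩ := h2 T hT
  exact ⟨U, hU, hST.trans hTU⟩

lemma dec_mono {Δ₁ Δ₂ : Distr α} (h : DistLE Δ₁ Δ₂) {L : Set (List α)}
    (hL : Decomposable L Δ₁) : Decomposable L Δ₂ := by
  apply Set.Subset.antisymm (subset_iInter_proj L Δ₂)
  intro s hs
  simp only [Set.mem_iInter, Set.mem_preimage, Set.mem_image] at hs
  have hmem : s ∈ ⋂ S ∈ Δ₁.comps, projA S ⁻¹' (projA S '' L) := by
    simp only [Set.mem_iInter, Set.mem_preimage, Set.mem_image]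
    intro S hS
    obtain ⟨T, hT, hST⟩ := h S hS
    obtain ⟨l, hl, hls⟩ := hs T hT
    exact ⟨l, hl, by rw [← projA_comp hST l, hls, projA_comp hST]⟩
  rw [hL]
  exact hmem

noncomputable def evenL (S : Set α) : Set (List α) := {u | Even (projA S u).length}

lemma dec_evenL {Δ : Distr α} {S : Set α} (hS : S ∈ Δ.comps) :
    Decomposable (evenL S) Δ := by
  apply Set.Subset.antisymm (subset_iInter_proj _ Δ)
  intro s hs
  simp only [Set.mem_iInter, Set.mem_preimage, Set.mem_image] at hs
  obtain ⟨l, hl, hls⟩ := hs S hS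
  simp only [evenL, Set.mem_setOf_eq] at hl ⊢
  rw [← hls]
  exact hl

lemma distLE_of_dec_imp {Δ₁ Δ₂ : Distr α}
    (h : ∀ L : Set (List α), Decomposable L Δ₁ → Decomposable L Δ₂) :
    DistLE Δ₁ Δ₂ := by
  intro S hS
  by_contra hcon
  push_neg at hcon
  obtain ⟨a, ha⟩ := Δ₁.comps_nonempty S hS
  have hdec := h (evenL S) (dec_evenL hS)
  have hmem : [a] ∈ ⋂ T ∈ Δ₂.comps, projA T ⁻¹' (projA T '' evenL S) := by
    simp only [Set.mem_iInter, Set.mem_preimage, Set.mem_image]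
    intro T hT
    obtain ⟨b, hbS, hbT⟩ := Set.not_subset.mp (hcon T hT)
    by_cases haT : a ∈ T
    · refine ⟨[a, b], ?_, ?_⟩
      · simp only [evenL, Set.mem_setOf_eq]
        simp [projA_cons_mem, ha, hbS, projA_nil]
      · simp [projA_cons_mem, projA_cons_not_mem, haT, hbT, projA_nil]
    · refine ⟨[], ?_, ?_⟩
      · simp only [evenL, Set.mem_setOf_eq]
        simp [projA_nil]
      · simp [projA_cons_not_mem, haT, projA_nil]
  rw [← hdec] at hmem
  simp only [evenL, Set.mem_setOf_eq] at hmem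
  rw [projA_cons_mem ha, projA_nil] at hmem
  simp at hmem

lemma maximalMem_subset {β : Type} (F : Set (Set β)) : MaximalMem F ⊆ F :=
  fun _ h => h.1

lemma exists_maximal_above {F : Set (Set α)} {A : Set α} (hA : A ∈ F) :
    ∃ M ∈ MaximalMem F, A ⊆ M := by
  obtain ⟨M, hM, hmax⟩ := Set.Finite.exists_maximalFor id {B ∈ F | A ⊆ B}
    (Set.toFinite _) ⟨A, hA, subset_rfl⟩
  exact ⟨M, ⟨hM.1, fun T hT hMT => Set.Subset.antisymm hMT (hmax ⟨hT, hM.2.trans hMT⟩ hMT)⟩, hM.2⟩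

/-- The family obtained by merging two components. -/
def mergeFam (Δ : Distr α) (S T : Set α) : Set (Set α) :=
  (Δ.comps \ {S, T}) ∪ {S ∪ T}

noncomputable def mergePair (Δ : Distr α) (S T : Set α) (hS : S ∈ Δ.comps)
    (_hT : T ∈ Δ.comps) : Distr α where
  comps := MaximalMem (mergeFam Δ S T)
  comps_nonempty := by
    intro U hU
    rcases hU.1 with h | h
    · exact Δ.comps_nonempty U h.1
    · rw [Set.mem_singleton_iff] at h
      subst h
      obtain ⟨a, ha⟩ := Δ.comps_nonempty S hS
      exact ⟨a, Or.inl ha⟩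
  comps_cover := by
    intro a
    obtain ⟨W, hW, haW⟩ := Δ.comps_cover a
    have hex : ∃ V ∈ mergeFam Δ S T, a ∈ V := by
      by_cases hWST : W = S ∨ W = T
      · refine ⟨S ∪ T, Or.inr rfl, ?_⟩
        rcases hWST with rfl | rfl
        · exact Or.inl haW
        · exact Or.inr haW
      · push_neg at hWST
        exact ⟨W, Or.inl ⟨hW, by simp [hWST.1, hWST.2]⟩, haW⟩
    obtain ⟨V, hV, haV⟩ := hex
    obtain ⟨M, hM, hVM⟩ := exists_maximal_above hV
    exact ⟨M, hM, hVM haV⟩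
  comps_incomp := by
    intro U hU V hV hne hsub
    exact hne (hU.2 V hV.1 hsub)

lemma mergePair_mem {Δ : Distr α} {S T : Set α} (hS : S ∈ Δ.comps)
    (hT : T ∈ Δ.comps) (hne : S ≠ T) :
    MinMergedFrom (mergePair Δ S T hS hT) Δ :=
  ⟨S, hS, T, hT, hne, rfl⟩

lemma minMerged_size {Δ Δ' : Distr α} (h : MinMergedFrom Δ' Δ)
    (hn : 3 ≤ Δ.comps.ncard) : Δ'.comps.ncard < Δ.comps.ncard := by
  obtain ⟨S, hS, T, hT, hne, hcomps⟩ := h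
  have h1 : Δ'.comps ⊆ (Δ.comps \ {S, T}) ∪ {S ∪ T} := by
    rw [hcomps]; exact maximalMem_subset _
  have h2 : Δ'.comps.ncard ≤ ((Δ.comps \ {S, T}) ∪ {S ∪ T}).ncard :=
    Set.ncard_le_ncard h1 (Set.toFinite _)
  have h3 : ((Δ.comps \ {S, T}) ∪ {S ∪ T}).ncard ≤ (Δ.comps \ {S, T}).ncard + 1 := by
    rw [Set.union_comm, Set.singleton_union]
    exact Set.ncard_insert_le _ _
  have hsub : ({S, T} : Set (Set α)) ⊆ Δ.comps := by
    intro x hx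
    rcases hx with rfl | hx
    · exact hS
    · rw [Set.mem_singleton_iff] at hx; subst hx; exact hT
  have h4 : (Δ.comps \ {S, T}).ncard = Δ.comps.ncard - 2 := by
    rw [Set.ncard_diff hsub (Set.toFinite _), Set.ncard_pair hne]
  omega

lemma distLE_minMerged {Δ Δ' : Distr α} (h : MinMergedFrom Δ' Δ) :
    DistLE Δ Δ' := by
  obtain ⟨S, hS, T, hT, hne, hcomps⟩ := h
  intro W hW
  have hex : ∃ V ∈ (Δ.comps \ {S, T}) ∪ {S ∪ T}, W ⊆ V := by
    by_cases hWST : W = S ∨ W = T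
    · refine ⟨S ∪ T, Or.inr rfl, ?_⟩
      rcases hWST with rfl | rfl
      · exact Set.subset_union_left
      · exact Set.subset_union_right
    · push_neg at hWST
      exact ⟨W, Or.inl ⟨hW, by simp [hWST.1, hWST.2]⟩, subset_rfl⟩
  obtain ⟨V, hV, hWV⟩ := hex
  obtain ⟨M, hM, hVM⟩ := exists_maximal_above hV
  rw [hcomps]
  exact ⟨M, hM, hWV.trans hVM⟩

lemma exists_minimal_le {F : Set (Distr α)} {x : Distr α} (hx : x ∈ F) :
    ∃ m ∈ MinimalD F, DistLE m x := by
  classical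
  let r : Distr α → Distr α → Prop := fun a b => DistLE a b ∧ ¬ DistLE b a
  haveI : IsTrans (Distr α) r := ⟨by
    rintro a b c ⟨hab, hba⟩ ⟨hbc, hcb⟩
    exact ⟨distLE_trans hab hbc, fun hca => hcb (distLE_trans hca hab)⟩⟩
  haveI : IsIrrefl (Distr α) r := ⟨by rintro a ⟨h1, h2⟩; exact h2 h1⟩
  have wf := Finite.wellFounded_of_trans_of_irrefl r
  obtain ⟨m, hm, hmin⟩ := wf.has_min {y ∈ F | DistLE y x} ⟨x, hx, distLE_refl x⟩
  refine ⟨m, ⟨hm.1, fun Δ'' h'' hle => ?_⟩, hm.2⟩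
  by_contra hno
  exact hmin Δ'' ⟨h'', distLE_trans hle hm.2⟩ ⟨hle, hno⟩

end Proof
/-- A distribution `Δ` of size at least 3 has a reduction
iff `[⊥(Δ)]` is a reduction of `Δ`. -/
theorem statement_19 {α : Type} [Fintype α] (Δ : Distr α)
    (hn : 3 ≤ Δ.comps.ncard) :
    (∃ P : Set (Distr α), IsReduction P Δ) ↔
      IsReduction (MinimalD {Δ' : Distr α | MinMergedFrom Δ' Δ}) Δ := by
  constructor
  · rintro ⟨P, _hP2, hPsize, hPiff⟩
    set F : Set (Distr α) := {Δ' : Distr α | MinMergedFrom Δ' Δ} with hF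
    have key : ∀ Δ'' ∈ P, ∃ Δ' ∈ F, DistLE Δ' Δ'' := by
      intro Δ'' hmem
      have hle : DistLE Δ Δ'' :=
        distLE_of_dec_imp (fun L hL => (hPiff L).1 hL Δ'' hmem)
      classical
      let f : Set α → Set α := fun S =>
        if h : S ∈ Δ.comps then (hle S h).choose else S
      have hf : ∀ S ∈ Δ.comps, f S ∈ Δ''.comps ∧ S ⊆ f S := by
        intro S hS
        simp only [f, dif_pos hS]
        exact ⟨(hle S hS).choose_spec.1, (hle S hS).choose_spec.2⟩
      obtain ⟨S, hS, T, hT, hne, hfeq⟩ :=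
        Set.exists_ne_map_eq_of_ncard_lt_of_maps_to (hPsize Δ'' hmem)
          (fun S hS => (hf S hS).1) (Set.toFinite _)
      refine ⟨mergePair Δ S T hS hT, mergePair_mem hS hT hne, ?_⟩
      intro U hU
      rcases hU.1 with h | h
      · exact hle U h.1
      · rw [Set.mem_singleton_iff] at h
        subst h
        refine ⟨f S, (hf S hS).1, ?_⟩
        apply Set.union_subset (hf S hS).2
        rw [hfeq]
        exact (hf T hT).2
    have hiff : ∀ L : Set (List α),
        Decomposable L Δ ↔ ∀ Δ' ∈ MinimalD F, Decomposable L Δ' := by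
      intro L
      constructor
      · intro hL Δ' hΔ'
        exact dec_mono (distLE_minMerged hΔ'.1) hL
      · intro hmin
        refine (hPiff L).2 ?_
        intro Δ'' hmem
        obtain ⟨Δ', hΔ', hle⟩ := key Δ'' hmem
        obtain ⟨m, hm, hmle⟩ := exists_minimal_le hΔ'
        exact dec_mono (distLE_trans hmle hle) (hmin m hm)
    have hsize : ∀ Δ' ∈ MinimalD F, Δ'.comps.ncard < Δ.comps.ncard :=
      fun Δ' h => minMerged_size h.1 hn
    refine ⟨?_, hsize, hiff⟩
    have hex : ∃ a ∈ MinimalD F, ∃ b ∈ MinimalD F, a ≠ b := by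
      by_contra hcon
      push_neg at hcon
      obtain ⟨S, hS, T, hT, hne⟩ :=
        (Set.one_lt_ncard (Set.toFinite _)).mp (by omega : 1 < Δ.comps.ncard)
      have hFne : (mergePair Δ S T hS hT) ∈ F := mergePair_mem hS hT hne
      obtain ⟨m₀, hm₀, _⟩ := exists_minimal_le hFne
      have huniq : ∀ m ∈ MinimalD F, m = m₀ := fun m hm => hcon m hm m₀ hm₀
      have himp : ∀ L : Set (List α), Decomposable L m₀ → Decomposable L Δ := by
        intro L hL
        refine (hiff L).2 ?_
        intro m hm
        rw [huniq m hm]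
        exact hL
      have h1 : DistLE m₀ Δ := distLE_of_dec_imp himp
      have h2 : DistLE Δ m₀ := distLE_minMerged hm₀.1
      have hsub : Δ.comps ⊆ m₀.comps := by
        intro W hW
        obtain ⟨T', hT', hWT⟩ := h2 W hW
        obtain ⟨W', hW', hTW⟩ := h1 T' hT'
        have hWW' : W = W' := by
          by_contra hne'
          exact Δ.comps_incomp W hW W' hW' hne' (hWT.trans hTW)
        have hTW' : T' = W := Set.Subset.antisymm (hWW' ▸ hTW) hWT
        rw [← hTW']
        exact hT'
      have hc1 := Set.ncard_le_ncard hsub (Set.toFinite _)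
      have hc2 := hsize m₀ hm₀
      omega
    obtain ⟨a, ha, b, hb, hne⟩ := hex
    exact (Set.one_lt_ncard (Set.toFinite _)).mpr ⟨a, ha, b, hb, hne⟩
  · intro h
    exact ⟨_, h⟩
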